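/- Let m ≥ 2 and n ≥ 1 be integers. Then Δ_{m,n}((m−1)/n) = m − 1. Moreover, there exists ε > 0 such that for all real h with 0 < h < ε, Δ_{m,n}((m−1)/n − h) = (m − 1) + (gcd(m−1, n) − 1). -/

import Mathlib

open Finset
open scoped Classical

/-- The ranking table `τ^{m,n}_ξ(i,j) = #{(s,t) ∈ [m]×[n] : s + tξ ≤ i + jξ}`. -/
noncomputable def tau (m n : ℕ) (ξ : ℝ) (i j : ℕ) : ℕ :=
  ((Finset.Icc 1 m ×ˢ Finset.Icc 1 n).filter
    (fun p => (p.1 : ℝ) + (p.2 : ℝ) * ξ ≤ (i : ℝ) + (j : ℝ) * ξ)).card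

/-- `Δ_{m,n}(ξ) = τ^{m,n}_ξ(m,1) − τ^{m,n}_ξ(1,n)` as an integer. -/
noncomputable def Delta (m n : ℕ) (ξ : ℝ) : ℤ :=
  (tau m n ξ m 1 : ℤ) - (tau m n ξ 1 n : ℤ)

lemma delta_eq_card (m n : ℕ) (ξ : ℝ) (hnm : (1:ℝ) + n * ξ ≤ m + 1 * ξ) :
    Delta m n ξ = ((Finset.Icc 1 m ×ˢ Finset.Icc 1 n).filter
      (fun p => ((1:ℝ) + (n:ℝ) * ξ < (p.1:ℝ) + (p.2:ℝ) * ξ) ∧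
        ((p.1:ℝ) + (p.2:ℝ) * ξ ≤ (m:ℝ) + 1 * ξ))).card := by
  classical
  unfold Delta tau
  set base := Finset.Icc 1 m ×ˢ Finset.Icc 1 n
  set A := base.filter (fun p => (p.1 : ℝ) + (p.2 : ℝ) * ξ ≤ (m : ℝ) + ((1:ℕ) : ℝ) * ξ) with hA
  set B := base.filter (fun p => (p.1 : ℝ) + (p.2 : ℝ) * ξ ≤ ((1:ℕ) : ℝ) + (n : ℝ) * ξ) with hB
  have hBA : B ⊆ A := by
    intro p hp
    simp only [hA, hB, Finset.mem_filter, Nat.cast_one] at *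
    exact ⟨hp.1, by linarith [hp.2]⟩
  have hsd : A \ B = base.filter
      (fun p => ((1:ℝ) + (n:ℝ) * ξ < (p.1:ℝ) + (p.2:ℝ) * ξ) ∧
        ((p.1:ℝ) + (p.2:ℝ) * ξ ≤ (m:ℝ) + 1 * ξ)) := by
    ext p
    simp only [Finset.mem_sdiff, Finset.mem_filter, hA, hB, Nat.cast_one, not_le, not_and]
    tauto
  have hcard := Finset.card_sdiff_add_card_eq_card hBA
  rw [← hsd]
  omega

lemma card_strip (M n : ℕ) (hM : 1 ≤ M) (hn : 1 ≤ n) :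
    ((Finset.Icc 1 (M+1) ×ˢ Finset.Icc 1 n).filter
      (fun p => n + n*M < p.1*n + p.2*M ∧ p.1*n + p.2*M ≤ n + n*M + M)).card = M := by
  have hIcc : (Finset.Icc 2 (M+1)).card = M := by rw [Nat.card_Icc]; omega
  have key : ((Finset.Icc 1 (M+1) ×ˢ Finset.Icc 1 n).filter
      (fun p => n + n*M < p.1*n + p.2*M ∧ p.1*n + p.2*M ≤ n + n*M + M)).card
      = (Finset.Icc 2 (M+1)).card := by
    apply Finset.card_bij (fun p _ => p.1)
    · rintro ⟨s, t⟩ hp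
      simp only [Finset.mem_filter, Finset.mem_product, Finset.mem_Icc] at hp
      obtain ⟨⟨⟨hs1, hs2⟩, ht1, ht2⟩, h1, h2⟩ := hp
      simp only [Finset.mem_Icc]
      refine ⟨?_, hs2⟩
      by_contra hcon
      have hs : s = 1 := by omega
      subst hs
      have : t*M ≤ n*M := Nat.mul_le_mul_right M ht2
      omega
    · rintro ⟨s, t⟩ hp ⟨s', t'⟩ hq (heq : s = s')
      subst heq
      simp only [Finset.mem_filter, Finset.mem_product, Finset.mem_Icc] at hp hq
      obtain ⟨-, h1, h2⟩ := hp
      obtain ⟨-, h1', h2'⟩ := hq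
      have : t = t' := by
        rcases lt_trichotomy t t' with hlt | he | hlt
        · exfalso
          have h3 : (t+1)*M ≤ t'*M := Nat.mul_le_mul_right M (by omega)
          have e : (t+1)*M = t*M + M := by ring
          omega
        · exact he
        · exfalso
          have h3 : (t'+1)*M ≤ t*M := Nat.mul_le_mul_right M (by omega)
          have e : (t'+1)*M = t'*M + M := by ring
          omega
      simp [this]
    · intro s hs
      simp only [Finset.mem_Icc] at hs
      obtain ⟨hs2, hsM⟩ := hs
      have hsn : s*n ≤ n + n*M := by
        have : s*n ≤ (M+1)*n := Nat.mul_le_mul_right n hsM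
        nlinarith
      obtain ⟨q, r, hqr, hrM⟩ : ∃ q r, n + n*M - s*n = M*q + r ∧ r < M :=
        ⟨_, _, (Nat.div_add_mod _ M).symm, Nat.mod_lt _ hM⟩
      have h2s : 2*n ≤ s*n := Nat.mul_le_mul_right n hs2
      have hcomm : M*q = q*M := Nat.mul_comm M q
      have hqM : (q+1)*M = q*M + M := by ring
      have hqn : q < n := by
        by_contra hcon
        have h4 : M*n ≤ M*q := Nat.mul_le_mul_left M (by omega)
        have h5 : M*n = n*M := Nat.mul_comm M n
        omega
      refine ⟨⟨s, q+1⟩, ?_, rfl⟩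
      simp only [Finset.mem_filter, Finset.mem_product, Finset.mem_Icc]
      refine ⟨⟨⟨by omega, hsM⟩, by omega, by omega⟩, by omega, by omega⟩
  rw [key, hIcc]

lemma card_E (M n : ℕ) (hM : 1 ≤ M) (hn : 1 ≤ n) :
    ((Finset.Icc 1 (M+1) ×ˢ Finset.Icc 1 n).filter
      (fun p => n + n*M = p.1*n + p.2*M ∧ p.2 < n)).card = Nat.gcd M n - 1 := by
  obtain ⟨a, ha⟩ := Nat.gcd_dvd_left M n
  obtain ⟨b, hb⟩ := Nat.gcd_dvd_right M n
  set d := Nat.gcd M n with hd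
  have hd1 : 1 ≤ d := Nat.gcd_pos_of_pos_left n hM
  have ha1 : 1 ≤ a := by
    by_contra h
    have : a = 0 := by omega
    subst this
    simp at ha
    omega
  have hb1 : 1 ≤ b := by
    by_contra h
    have : b = 0 := by omega
    subst this
    simp at hb
    omega
  have hco : Nat.Coprime a b := by
    have h0 : 0 < d := hd1
    have := Nat.coprime_div_gcd_div_gcd (m := M) (n := n) h0
    have e1 : M / d = a := by rw [ha]; exact Nat.mul_div_cancel_left a h0
    have e2 : n / d = b := by rw [hb]; exact Nat.mul_div_cancel_left b h0
    rwa [e1, e2] at this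
  have hIcc : (Finset.Icc 1 (d-1)).card = d - 1 := by rw [Nat.card_Icc]; omega
  have hkey : ∀ s t : ℕ, 1 ≤ s → s ≤ M+1 → 1 ≤ t → t ≤ n →
      (n + n*M = s*n + t*M) → t < n →
      t / b = (t / b) ∧ t = b * (t/b) ∧ a * (t/b) + s = M + 1 ∧ 1 ≤ t/b ∧ t/b ≤ d - 1 := by
    intro s t hs1 hs2 ht1 ht2 heq htn
    have hX : n*(M+1-s) + n*s = n*(M+1) := by rw [← Nat.mul_add]; congr 1; omega
    have hcm : n*s = s*n := Nat.mul_comm n s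
    have hnM : n*(M+1) = n + n*M := by ring
    have htM : t*M = n*(M+1-s) := by omega
    have h2 : d*(t*a) = d*(b*(M+1-s)) := by
      have e1 : d*(t*a) = t*M := by rw [ha]; ring
      have e2 : d*(b*(M+1-s)) = n*(M+1-s) := by rw [hb]; ring
      omega
    have h3 : t*a = b*(M+1-s) := Nat.eq_of_mul_eq_mul_left (by omega) h2
    have hbt : b ∣ t := Nat.Coprime.dvd_of_dvd_mul_right hco.symm ⟨_, h3⟩
    obtain ⟨k, hk⟩ := hbt
    have hkval : t / b = k := by rw [hk]; exact Nat.mul_div_cancel_left k (by omega)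
    have hk1 : 1 ≤ k := by
      by_contra h
      have : k = 0 := by omega
      subst this
      simp at hk
      omega
    have hkd : k < d := by
      have : b*k < b*d := by
        have : b*d = n := by rw [hb]; ring
        omega
      exact Nat.lt_of_mul_lt_mul_left this
    have hsk : a*k + s = M+1 := by
      have h4 : b*(k*a) = b*(M+1-s) := by
        have : t*a = b*(k*a) := by rw [hk]; ring
        omega
      have h5 : k*a = M+1-s := Nat.eq_of_mul_eq_mul_left (by omega) h4
      have : k*a = a*k := Nat.mul_comm k a
      omega
    rw [hkval]
    exact ⟨rfl, hk, hsk, by omega, by omega⟩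
  rw [← hIcc]
  apply Finset.card_bij' (fun p _ => p.2 / b) (fun k _ => (M + 1 - a*k, b*k))
  · rintro ⟨s, t⟩ hp
    simp only [Finset.mem_filter, Finset.mem_product, Finset.mem_Icc] at hp
    obtain ⟨⟨⟨hs1, hs2⟩, ht1, ht2⟩, heq, htn⟩ := hp
    obtain ⟨-, -, -, h1, h2⟩ := hkey s t hs1 hs2 ht1 ht2 heq htn
    simp only [Finset.mem_Icc]
    exact ⟨h1, h2⟩
  · intro k hk
    simp only [Finset.mem_Icc] at hk
    obtain ⟨hk1, hkd⟩ := hk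
    have hak : a*k + a ≤ M := by
      have : a*k ≤ a*(d-1) := Nat.mul_le_mul_left a hkd
      have e : a*(d-1) + a = a*d := by
        rw [← Nat.mul_succ]
        congr 1
        omega
      have : a*d = M := by rw [ha]; ring
      omega
    have hbk : b*k + b ≤ n := by
      have : b*k ≤ b*(d-1) := Nat.mul_le_mul_left b hkd
      have e : b*(d-1) + b = b*d := by
        rw [← Nat.mul_succ]
        congr 1
        omega
      have : b*d = n := by rw [hb]; ring
      omega
    simp only [Finset.mem_filter, Finset.mem_product, Finset.mem_Icc]
    refine ⟨⟨⟨by omega, by omega⟩, Nat.mul_pos (by omega) (by omega), by omega⟩, ?_, by omega⟩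
    have e1 : (M+1-a*k)*n + (a*k)*n = (M+1)*n := by
      rw [← Nat.add_mul]
      congr 1
      omega
    have e2 : (a*k)*n = (b*k)*M := by rw [ha, hb]; ring
    have e3 : (M+1)*n = n + n*M := by ring
    omega
  · rintro ⟨s, t⟩ hp
    simp only [Finset.mem_filter, Finset.mem_product, Finset.mem_Icc] at hp
    obtain ⟨⟨⟨hs1, hs2⟩, ht1, ht2⟩, heq, htn⟩ := hp
    obtain ⟨-, h2, h3, -, -⟩ := hkey s t hs1 hs2 ht1 ht2 heq htn
    simp only [Prod.mk.injEq]
    constructor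
    · omega
    · omega
  · intro k hk
    simp only
    exact Nat.mul_div_cancel_left k (by omega)

lemma card_strip' (M n : ℕ) (hM : 1 ≤ M) (hn : 1 ≤ n) :
    ((Finset.Icc 1 (M+1) ×ˢ Finset.Icc 1 n).filter
      (fun p => (n + n*M < p.1*n + p.2*M ∨ (n + n*M = p.1*n + p.2*M ∧ p.2 < n))
        ∧ p.1*n + p.2*M ≤ n + n*M + M)).card
      = M + (Nat.gcd M n - 1) := by
  have hcong : (Finset.Icc 1 (M+1) ×ˢ Finset.Icc 1 n).filter
      (fun p => (n + n*M < p.1*n + p.2*M ∨ (n + n*M = p.1*n + p.2*M ∧ p.2 < n))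
        ∧ p.1*n + p.2*M ≤ n + n*M + M)
      = (Finset.Icc 1 (M+1) ×ˢ Finset.Icc 1 n).filter
      (fun p => (n + n*M < p.1*n + p.2*M ∧ p.1*n + p.2*M ≤ n + n*M + M)
        ∨ (n + n*M = p.1*n + p.2*M ∧ p.2 < n)) := by
    apply Finset.filter_congr
    rintro ⟨s, t⟩ -
    simp only
    constructor
    · rintro ⟨h1 | h1, h2⟩
      · exact Or.inl ⟨h1, h2⟩
      · exact Or.inr h1
    · rintro (⟨h1, h2⟩ | ⟨h1, h2⟩)
      · exact ⟨Or.inl h1, h2⟩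
      · exact ⟨Or.inr ⟨h1, h2⟩, by omega⟩
  rw [hcong, Finset.filter_or, Finset.card_union_of_disjoint,
    card_strip M n hM hn, card_E M n hM hn]
  rw [Finset.disjoint_filter]
  rintro ⟨s, t⟩ - ⟨h1, -⟩ ⟨h2, -⟩
  omega

set_option maxHeartbeats 2000000 in
theorem Delta_at_left_boundary (m n : ℕ) (hm : 2 ≤ m) (hn : 1 ≤ n) :
    Delta m n (((m : ℝ) - 1) / (n : ℝ)) = (m : ℤ) - 1 ∧
    ∃ ε : ℝ, 0 < ε ∧ ∀ h : ℝ, 0 < h → h < ε →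
      Delta m n (((m : ℝ) - 1) / (n : ℝ) - h) =
        ((m : ℤ) - 1) + ((Nat.gcd (m - 1) n : ℤ) - 1) := by
  obtain ⟨M, rfl⟩ : ∃ M, m = M + 1 := ⟨m - 1, by omega⟩
  have hM : 1 ≤ M := by omega
  have hn0 : (0:ℝ) < n := by exact_mod_cast hn
  have hn1 : (1:ℝ) ≤ n := by exact_mod_cast hn
  have hξrw : ((↑(M+1) : ℝ) - 1) / (n : ℝ) = (M:ℝ)/n := by push_cast; ring
  have hnMdiv : (n:ℝ) * ((M:ℝ)/n) = M := by field_simp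
  constructor
  · -- at ξ₀
    rw [hξrw, delta_eq_card (M+1) n ((M:ℝ)/n) (by push_cast; nlinarith [div_nonneg (by positivity : (0:ℝ) ≤ (M:ℝ)) hn0.le])]
    have hbridge : (Finset.Icc 1 (M+1) ×ˢ Finset.Icc 1 n).filter
        (fun p => ((1:ℝ) + (n:ℝ) * ((M:ℝ)/n) < (p.1:ℝ) + (p.2:ℝ) * ((M:ℝ)/n)) ∧
          ((p.1:ℝ) + (p.2:ℝ) * ((M:ℝ)/n) ≤ ((M+1:ℕ):ℝ) + 1 * ((M:ℝ)/n)))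
        = (Finset.Icc 1 (M+1) ×ˢ Finset.Icc 1 n).filter
        (fun p => n + n*M < p.1*n + p.2*M ∧ p.1*n + p.2*M ≤ n + n*M + M) := by
      apply Finset.filter_congr
      rintro ⟨s, t⟩ -
      simp only
      have e1 : (1:ℝ) + (n:ℝ) * ((M:ℝ)/n) = ((n + n*M : ℕ):ℝ)/n := by
        push_cast; field_simp; try ring
      have e2 : (s:ℝ) + (t:ℝ) * ((M:ℝ)/n) = ((s*n + t*M : ℕ):ℝ)/n := by
        push_cast; field_simp; try ring
      have e3 : ((M+1:ℕ):ℝ) + 1 * ((M:ℝ)/n) = ((n + n*M + M : ℕ):ℝ)/n := by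
        push_cast; field_simp; try ring
      rw [e1, e2, e3, div_lt_div_iff_of_pos_right hn0, div_le_div_iff_of_pos_right hn0,
        Nat.cast_lt, Nat.cast_le]
    rw [hbridge, card_strip M n hM hn]
    push_cast
    ring
  · -- just to the left
    refine ⟨1/((n:ℝ)*n), by positivity, ?_⟩
    intro h h0 hε
    have hu0 : (0:ℝ) < n*h := by positivity
    have hu1 : (n:ℝ)*(n*h) < 1 := by
      have := (lt_div_iff₀ (by positivity : (0:ℝ) < (n:ℝ)*n)).1 hε
      nlinarith
    rw [hξrw, delta_eq_card (M+1) n ((M:ℝ)/n - h) ?side]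
    case side =>
      push_cast
      nlinarith [div_nonneg (by positivity : (0:ℝ) ≤ (M:ℝ)) hn0.le,
        mul_nonneg (by linarith : (0:ℝ) ≤ (n:ℝ) - 1) h0.le]
    have hbridge : (Finset.Icc 1 (M+1) ×ˢ Finset.Icc 1 n).filter
        (fun p => ((1:ℝ) + (n:ℝ) * ((M:ℝ)/n - h) < (p.1:ℝ) + (p.2:ℝ) * ((M:ℝ)/n - h)) ∧
          ((p.1:ℝ) + (p.2:ℝ) * ((M:ℝ)/n - h) ≤ ((M+1:ℕ):ℝ) + 1 * ((M:ℝ)/n - h)))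
        = (Finset.Icc 1 (M+1) ×ˢ Finset.Icc 1 n).filter
        (fun p => (n + n*M < p.1*n + p.2*M ∨ (n + n*M = p.1*n + p.2*M ∧ p.2 < n))
          ∧ p.1*n + p.2*M ≤ n + n*M + M) := by
      apply Finset.filter_congr
      rintro ⟨s, t⟩ hp
      simp only [Finset.mem_product, Finset.mem_Icc] at hp
      obtain ⟨⟨hs1, hs2⟩, ht1, ht2⟩ := hp
      simp only
      have htr : (1:ℝ) ≤ t := by exact_mod_cast ht1
      have htn : (t:ℝ) ≤ n := by exact_mod_cast ht2
      have htu : (t:ℝ)*(n*h) ≤ (n:ℝ)*(n*h) := mul_le_mul_of_nonneg_right htn hu0.le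
      have htu0 : (0:ℝ) < (t:ℝ)*(n*h) := by positivity
      have e1 : (n:ℝ) * ((1:ℝ) + (n:ℝ) * ((M:ℝ)/n - h)) = ((n + n*M : ℕ):ℝ) - n*(n*h) := by
        push_cast; field_simp; try ring
      have e2 : (n:ℝ) * ((s:ℝ) + (t:ℝ) * ((M:ℝ)/n - h)) = ((s*n + t*M : ℕ):ℝ) - t*(n*h) := by
        push_cast; field_simp; try ring
      have e3 : (n:ℝ) * (((M+1:ℕ):ℝ) + 1 * ((M:ℝ)/n - h)) = ((n + n*M + M : ℕ):ℝ) - n*h := by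
        push_cast; field_simp; try ring
      constructor
      · rintro ⟨hc1, hc2⟩
        have hc1' : ((n + n*M : ℕ):ℝ) - n*(n*h) < ((s*n + t*M : ℕ):ℝ) - t*(n*h) := by
          rw [← e1, ← e2]
          exact (mul_lt_mul_iff_right₀ hn0).2 hc1
        have hc2' : ((s*n + t*M : ℕ):ℝ) - t*(n*h) ≤ ((n + n*M + M : ℕ):ℝ) - n*h := by
          rw [← e2, ← e3]
          exact (mul_le_mul_iff_right₀ hn0).2 hc2
        constructor
        · -- first nat condition (disjunction)
          have hXY : n + n*M ≤ s*n + t*M := by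
            by_contra hc
            have hYX : ((s*n + t*M : ℕ):ℝ) + 1 ≤ ((n + n*M : ℕ):ℝ) := by
              exact_mod_cast (by omega : s*n + t*M + 1 ≤ n + n*M)
            linarith
          rcases eq_or_lt_of_le hXY with heq | hlt
          · refine Or.inr ⟨heq, ?_⟩
            have heqr : ((n + n*M : ℕ):ℝ) = ((s*n + t*M : ℕ):ℝ) := by exact_mod_cast heq
            have : (t:ℝ)*(n*h) < (n:ℝ)*(n*h) := by linarith
            have : (t:ℝ) < n := lt_of_mul_lt_mul_right this hu0.le
            exact_mod_cast this
          · exact Or.inl hlt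
        · -- second nat condition
          by_contra hc
          have hZY : ((n + n*M + M : ℕ):ℝ) + 1 ≤ ((s*n + t*M : ℕ):ℝ) := by
            exact_mod_cast (by omega : n + n*M + M + 1 ≤ s*n + t*M)
          have hun : (n:ℝ)*h ≤ (t:ℝ)*(n*h) := by nlinarith
          linarith
      · rintro ⟨hc1, hc2⟩
        have goal1 : ((n + n*M : ℕ):ℝ) - n*(n*h) < ((s*n + t*M : ℕ):ℝ) - t*(n*h) := by
          rcases hc1 with hlt | ⟨heq, htn'⟩
          · have : ((n + n*M : ℕ):ℝ) + 1 ≤ ((s*n + t*M : ℕ):ℝ) := by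
              exact_mod_cast (by omega : n + n*M + 1 ≤ s*n + t*M)
            linarith
          · have heqr : ((n + n*M : ℕ):ℝ) = ((s*n + t*M : ℕ):ℝ) := by exact_mod_cast heq
            have htnr : (t:ℝ) < n := by exact_mod_cast htn'
            have : (t:ℝ)*(n*h) < (n:ℝ)*(n*h) := mul_lt_mul_of_pos_right htnr hu0
            linarith
        have goal2 : ((s*n + t*M : ℕ):ℝ) - t*(n*h) ≤ ((n + n*M + M : ℕ):ℝ) - n*h := by
          have hYZ : ((s*n + t*M : ℕ):ℝ) ≤ ((n + n*M + M : ℕ):ℝ) := by exact_mod_cast hc2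
          have hun : (n:ℝ)*h ≤ (t:ℝ)*(n*h) := by nlinarith
          linarith
        constructor
        · have := goal1
          rw [← e1, ← e2] at this
          exact lt_of_mul_lt_mul_left this hn0.le
        · have := goal2
          rw [← e2, ← e3] at this
          exact le_of_mul_le_mul_left this hn0
    rw [hbridge, card_strip' M n hM hn]
    have hg : 1 ≤ Nat.gcd M n := Nat.gcd_pos_of_pos_left n hM
    simp only [Nat.add_sub_cancel]
    push_cast [Nat.cast_sub hg]
    ring
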